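/- Let (Ω, F, P) be a probability space and f, g be F-measurable real-valued functions with g ≠ 0 a.s. Then for any ε > 0, sup_x |P(f/g ≤ x) - Φ(x)| ≤ sup_y |P(f ≤ y) - Φ(y)| + P(|g - 1| > ε) + ε, where Φ is the standard normal CDF. -/

import Mathlib

open MeasureTheory

/-- The standard normal cumulative distribution function. -/
noncomputable def stdNormalCDF (x : ℝ) : ℝ :=
  ∫ u in Set.Iic x, (Real.sqrt (2 * Real.pi))⁻¹ * Real.exp (-u ^ 2 / 2)

namespace MPaux

noncomputable def phi (u : ℝ) : ℝ := (Real.sqrt (2 * Real.pi))⁻¹ * Real.exp (-u ^ 2 / 2)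

lemma phi_nonneg (u : ℝ) : 0 ≤ phi u := by unfold phi; positivity

lemma phi_eq : phi = fun u => (Real.sqrt (2 * Real.pi))⁻¹ * Real.exp (-(1/2 : ℝ) * u ^ 2) := by
  funext u; unfold phi; ring_nf

lemma sqrt2pi_pos : 0 < Real.sqrt (2 * Real.pi) := Real.sqrt_pos.2 (by positivity)

lemma phi_integrable : Integrable phi := by
  rw [phi_eq]
  exact (integrable_exp_neg_mul_sq (by norm_num)).const_mul _

lemma integral_phi : ∫ u, phi u = 1 := by
  rw [phi_eq, integral_const_mul, integral_gaussian,
    show Real.pi / (1/2 : ℝ) = 2 * Real.pi by ring]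
  exact inv_mul_cancel₀ sqrt2pi_pos.ne'

lemma integral_phi_Ioi : ∫ u in Set.Ioi (0:ℝ), phi u = 1/2 := by
  rw [phi_eq, integral_const_mul, integral_gaussian_Ioi,
    show Real.pi / (1/2 : ℝ) = 2 * Real.pi by ring]
  field_simp

lemma cdf_eq (x : ℝ) : stdNormalCDF x = ∫ u in Set.Iic x, phi u := rfl

lemma cdf_nonneg (x : ℝ) : 0 ≤ stdNormalCDF x :=
  setIntegral_nonneg measurableSet_Iic fun u _ => phi_nonneg u

lemma cdf_le_one (x : ℝ) : stdNormalCDF x ≤ 1 := by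
  rw [cdf_eq, ← integral_phi]
  exact setIntegral_le_integral phi_integrable (Filter.Eventually.of_forall phi_nonneg)

lemma cdf_diff {a b : ℝ} (hab : a ≤ b) :
    stdNormalCDF b - stdNormalCDF a = ∫ u in Set.Ioc a b, phi u := by
  have h : stdNormalCDF b = stdNormalCDF a + ∫ u in Set.Ioc a b, phi u := by
    rw [cdf_eq, cdf_eq, ← Set.Iic_union_Ioc_eq_Iic hab,
      setIntegral_union (Set.Iic_disjoint_Ioc le_rfl) measurableSet_Ioc
        phi_integrable.integrableOn phi_integrable.integrableOn]
  linarith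

lemma cdf_diff_le_half {a b : ℝ} (ha : 0 ≤ a) (hab : a ≤ b) :
    stdNormalCDF b - stdNormalCDF a ≤ 1/2 := by
  rw [cdf_diff hab, ← integral_phi_Ioi]
  refine setIntegral_mono_set phi_integrable.integrableOn
    (Filter.Eventually.of_forall phi_nonneg) ?_
  exact HasSubset.Subset.eventuallyLE
    (Set.Ioc_subset_Ioi_self.trans (Set.Ioi_subset_Ioi ha))

lemma integral_Ioc_le {a b C : ℝ} (hab : a ≤ b)
    (h : ∀ u ∈ Set.Ioc a b, phi u ≤ C) :
    ∫ u in Set.Ioc a b, phi u ≤ C * (b - a) := by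
  calc ∫ u in Set.Ioc a b, phi u ≤ ∫ _ in Set.Ioc a b, C :=
        setIntegral_mono_on phi_integrable.integrableOn
          (integrableOn_const (by simp) (by simp)) measurableSet_Ioc h
    _ = C * (b - a) := by
        rw [setIntegral_const, Measure.real, Real.volume_Ioc, ENNReal.toReal_ofReal (by linarith)]
        rw [smul_eq_mul, mul_comm]

lemma phi_le {s u : ℝ} (hs : 0 ≤ s) (hsu : s ≤ u) : phi u ≤ phi s := by
  unfold phi
  refine mul_le_mul_of_nonneg_left ?_ (inv_nonneg.2 sqrt2pi_pos.le)
  exact Real.exp_le_exp.2 (by nlinarith)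

lemma t_phi_le_half {t : ℝ} (ht : 0 ≤ t) : t * phi t ≤ 1/2 := by
  have h1 : t ≤ Real.exp (t^2/2) := by
    have := Real.add_one_le_exp (t^2/2)
    nlinarith
  have h2 : t * Real.exp (-t^2/2) ≤ 1 := by
    calc t * Real.exp (-t^2/2) ≤ Real.exp (t^2/2) * Real.exp (-t^2/2) :=
          mul_le_mul_of_nonneg_right h1 (Real.exp_nonneg _)
      _ = 1 := by rw [← Real.exp_add, show t^2/2 + -t^2/2 = 0 by ring, Real.exp_zero]
  have h3 : (Real.sqrt (2 * Real.pi))⁻¹ ≤ 1/2 := by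
    have hs4 : Real.sqrt 4 = 2 := by
      rw [show (4:ℝ) = 2^2 by norm_num, Real.sqrt_sq (by norm_num)]
    have h2s : (2:ℝ) ≤ Real.sqrt (2 * Real.pi) := by
      rw [← hs4]
      exact Real.sqrt_le_sqrt (by nlinarith [Real.pi_gt_three])
    rw [inv_le_comm₀ sqrt2pi_pos (by norm_num), show (1/2:ℝ)⁻¹ = 2 by norm_num]
    exact h2s
  have h4 : 0 ≤ Real.exp (-t^2/2) := Real.exp_nonneg _
  calc t * phi t = (Real.sqrt (2 * Real.pi))⁻¹ * (t * Real.exp (-t^2/2)) := by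
        unfold phi; ring
    _ ≤ (1/2) * 1 := by
        apply mul_le_mul h3 h2 (mul_nonneg ht h4) (by norm_num)
    _ = 1/2 := by norm_num

lemma cdf_A {x ε : ℝ} (hx : 0 ≤ x) (hε : 0 < ε) :
    stdNormalCDF (x * (1 + ε)) - stdNormalCDF x ≤ ε := by
  have hab : x ≤ x * (1 + ε) := by nlinarith
  rw [cdf_diff hab]
  calc ∫ u in Set.Ioc x (x*(1+ε)), phi u ≤ phi x * (x * (1+ε) - x) :=
        integral_Ioc_le hab (fun u hu => phi_le hx (le_of_lt hu.1))
    _ = ε * (x * phi x) := by ring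
    _ ≤ ε * (1/2) := mul_le_mul_of_nonneg_left (t_phi_le_half hx) hε.le
    _ ≤ ε := by linarith

lemma cdf_B {x ε : ℝ} (hx : 0 ≤ x) (hε : 0 < ε) (hε1 : ε < 1) :
    stdNormalCDF x - stdNormalCDF (x * (1 - ε)) ≤ ε := by
  set a := x * (1 - ε) with ha
  have ha0 : 0 ≤ a := by nlinarith
  have hab : a ≤ x := by nlinarith
  rcases le_or_gt (1/2 : ℝ) ε with h | h
  · exact (cdf_diff_le_half ha0 hab).trans h
  · rw [cdf_diff hab]
    have hx2a : x ≤ 2 * a := by rw [ha]; nlinarith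
    calc ∫ u in Set.Ioc a x, phi u ≤ phi a * (x - a) :=
          integral_Ioc_le hab (fun u hu => phi_le ha0 (le_of_lt hu.1))
      _ = ε * (x * phi a) := by rw [ha]; ring
      _ ≤ ε * (2 * (a * phi a)) := by
          refine mul_le_mul_of_nonneg_left ?_ hε.le
          nlinarith [phi_nonneg a, mul_le_mul_of_nonneg_right hx2a (phi_nonneg a)]
      _ ≤ ε * (2 * (1/2)) := by
          refine mul_le_mul_of_nonneg_left ?_ hε.le
          nlinarith [t_phi_le_half ha0]
      _ = ε := by ring

lemma cdf_neg (x : ℝ) : stdNormalCDF (-x) = 1 - stdNormalCDF x := by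
  have heven : ∀ u : ℝ, phi (-u) = phi u := by
    intro u; unfold phi; rw [neg_sq]
  have h1 : stdNormalCDF (-x) = ∫ u in Set.Ioi x, phi u := by
    rw [cdf_eq]
    calc ∫ u in Set.Iic (-x), phi u = ∫ u in Set.Iic (-x), phi (-u) := by
          simp_rw [heven]
      _ = ∫ u in Set.Ioi (- -x), phi u := integral_comp_neg_Iic (-x) phi
      _ = ∫ u in Set.Ioi x, phi u := by rw [neg_neg]
  have h2 : stdNormalCDF x + ∫ u in Set.Ioi x, phi u = 1 := by
    rw [cdf_eq, ← integral_phi,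
      ← setIntegral_union (Set.Iic_disjoint_Ioi le_rfl) measurableSet_Ioi
        phi_integrable.integrableOn phi_integrable.integrableOn,
      Set.Iic_union_Ioi, setIntegral_univ]
  linarith

lemma cdf_A' {x ε : ℝ} (hx : x < 0) (hε : 0 < ε) :
    stdNormalCDF x - stdNormalCDF (x * (1 + ε)) ≤ ε := by
  have h := cdf_A (x := -x) (ε := ε) (by linarith) hε
  rw [show -x * (1+ε) = -(x * (1+ε)) by ring, cdf_neg, cdf_neg] at h
  linarith

lemma cdf_B' {x ε : ℝ} (hx : x < 0) (hε : 0 < ε) (hε1 : ε < 1) :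
    stdNormalCDF (x * (1 - ε)) - stdNormalCDF x ≤ ε := by
  have h := cdf_B (x := -x) (ε := ε) (by linarith) hε hε1
  rw [show -x * (1-ε) = -(x * (1-ε)) by ring, cdf_neg, cdf_neg] at h
  linarith

end MPaux

open MPaux in
theorem michael_pfanzagl
    {Ω : Type*} [MeasurableSpace Ω] (P : Measure Ω) [IsProbabilityMeasure P]
    (f g : Ω → ℝ) (hf : Measurable f) (hg : Measurable g)
    (hg0 : ∀ᵐ ω ∂P, g ω ≠ 0) (ε : ℝ) (hε : 0 < ε) :
    ∀ x : ℝ,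
      |(P {ω | f ω / g ω ≤ x}).toReal - stdNormalCDF x| ≤
        (⨆ y : ℝ, |(P {ω | f ω ≤ y}).toReal - stdNormalCDF y|) +
          (P {ω | |g ω - 1| > ε}).toReal + ε := by
  intro x
  set Δ := ⨆ y : ℝ, |(P {ω | f ω ≤ y}).toReal - stdNormalCDF y| with hΔdef
  set δ := (P {ω | |g ω - 1| > ε}).toReal with hδdef
  have hP1 : ∀ s : Set Ω, (P s).toReal ≤ 1 := by
    intro s
    have h : P s ≤ 1 := by
      simpa using measure_mono (μ := P) (Set.subset_univ s)
    simpa using ENNReal.toReal_mono ENNReal.one_ne_top h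
  have habs1 : ∀ (s : Set Ω) (y : ℝ), |(P s).toReal - stdNormalCDF y| ≤ 1 := by
    intro s y
    rw [abs_sub_le_iff]
    constructor
    · linarith [hP1 s, cdf_nonneg y]
    · linarith [cdf_le_one y, (ENNReal.toReal_nonneg : (0:ℝ) ≤ (P s).toReal)]
  have hbdd : BddAbove (Set.range fun y => |(P {ω | f ω ≤ y}).toReal - stdNormalCDF y|) := by
    refine ⟨1, ?_⟩
    rintro r ⟨y, rfl⟩
    exact habs1 _ y
  have hΔy : ∀ y, |(P {ω | f ω ≤ y}).toReal - stdNormalCDF y| ≤ Δ :=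
    fun y => le_ciSup hbdd y
  have hΔ0 : 0 ≤ Δ := le_trans (abs_nonneg _) (hΔy 0)
  have hδ0 : 0 ≤ δ := ENNReal.toReal_nonneg
  rcases le_or_gt 1 ε with hε1 | hε1
  · linarith [habs1 {ω | f ω / g ω ≤ x} x]
  -- now ε < 1
  have hPsub : ∀ S T : Set Ω, S ⊆ T ∪ {ω | |g ω - 1| > ε} →
      (P S).toReal ≤ (P T).toReal + δ := by
    intro S T hST
    have h : P S ≤ P T + P {ω | |g ω - 1| > ε} :=
      (measure_mono hST).trans (measure_union_le _ _)
    have h2 := ENNReal.toReal_mono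
      (ENNReal.add_ne_top.2 ⟨measure_ne_top _ _, measure_ne_top _ _⟩) h
    rwa [ENNReal.toReal_add (measure_ne_top _ _) (measure_ne_top _ _)] at h2
  have key : ∃ b c : ℝ,
      {ω | f ω / g ω ≤ x} ⊆ {ω | f ω ≤ b} ∪ {ω | |g ω - 1| > ε} ∧
      {ω | f ω ≤ c} ⊆ {ω | f ω / g ω ≤ x} ∪ {ω | |g ω - 1| > ε} ∧
      stdNormalCDF b - stdNormalCDF x ≤ ε ∧
      stdNormalCDF x - stdNormalCDF c ≤ ε := by
    rcases le_or_gt 0 x with hx | hx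
    · refine ⟨x * (1 + ε), x * (1 - ε), ?_, ?_, cdf_A hx hε, cdf_B hx hε hε1⟩
      · intro ω hω
        rcases le_or_gt (|g ω - 1|) ε with hgood | hbad
        · left
          have h12 := abs_le.1 hgood
          have hgpos : 0 < g ω := by linarith [h12.1]
          have hfg : f ω ≤ x * g ω := (div_le_iff₀ hgpos).1 hω
          have : f ω ≤ x * (1 + ε) := by nlinarith [h12.2]
          exact this
        · right; exact hbad
      · intro ω hω
        rcases le_or_gt (|g ω - 1|) ε with hgood | hbad
        · left
          have h12 := abs_le.1 hgood
          have hgpos : 0 < g ω := by linarith [h12.1]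
          have hfω : f ω ≤ x * (1 - ε) := hω
          have : f ω ≤ x * g ω := by nlinarith [h12.1]
          exact (div_le_iff₀ hgpos).2 this
        · right; exact hbad
    · refine ⟨x * (1 - ε), x * (1 + ε), ?_, ?_, cdf_B' hx hε hε1, cdf_A' hx hε⟩
      · intro ω hω
        rcases le_or_gt (|g ω - 1|) ε with hgood | hbad
        · left
          have h12 := abs_le.1 hgood
          have hgpos : 0 < g ω := by linarith [h12.1]
          have hfg : f ω ≤ x * g ω := (div_le_iff₀ hgpos).1 hω
          have : f ω ≤ x * (1 - ε) := by nlinarith [h12.1]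
          exact this
        · right; exact hbad
      · intro ω hω
        rcases le_or_gt (|g ω - 1|) ε with hgood | hbad
        · left
          have h12 := abs_le.1 hgood
          have hgpos : 0 < g ω := by linarith [h12.1]
          have hfω : f ω ≤ x * (1 + ε) := hω
          have : f ω ≤ x * g ω := by nlinarith [h12.2]
          exact (div_le_iff₀ hgpos).2 this
        · right; exact hbad
  obtain ⟨b, c, hsub1, hsub2, hΦb, hΦc⟩ := key
  have hup : (P {ω | f ω / g ω ≤ x}).toReal ≤ (P {ω | f ω ≤ b}).toReal + δ :=
    hPsub _ _ hsub1
  have hlo : (P {ω | f ω ≤ c}).toReal ≤ (P {ω | f ω / g ω ≤ x}).toReal + δ :=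
    hPsub _ _ hsub2
  have hb := abs_le.1 (hΔy b)
  have hc := abs_le.1 (hΔy c)
  rw [abs_sub_le_iff]
  constructor
  · linarith [hb.2]
  · linarith [hc.1]
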